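/- For every integer m ≥ 2, the function (t,y) ↦ t^{m−1}·(−2 + iy)^m·exp(−π t(4 + y²))·e^{2πiy} is absolutely integrable on (0,∞) × ℝ, and ∫_ℝ ∫₀^∞ t^{m−1}·(−2 + iy)^m·exp(−π t(4 + y²))·e^{2πiy} dt dy = (−2)^m · e^{−4π}. -/

import Mathlib

open Complex Real MeasureTheory Set Filter Topology
open scoped FourierTransform Nat

lemma aux_norm (n : ℕ) (a : ℂ) {t : ℝ} (ht : 0 < t) :
    ‖(t : ℂ) ^ n * Complex.exp (-a * t)‖ = t ^ n * Real.exp (-a.re * t) := by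
  rw [norm_mul, norm_pow, Complex.norm_exp,
    Complex.norm_real, Real.norm_eq_abs, abs_of_pos ht]
  congr 2
  simp [Complex.mul_re]

lemma aux_intOn (n : ℕ) {a : ℂ} (ha : 0 < a.re) :
    IntegrableOn (fun t : ℝ => (t : ℂ) ^ n * Complex.exp (-a * t)) (Set.Ioi 0) := by
  have h := integrableOn_rpow_mul_exp_neg_mul_rpow (p := 1) (s := n) (b := a.re)
    (lt_of_lt_of_le neg_one_lt_zero (Nat.cast_nonneg n)) one_pos ha
  refine h.integrable.mono' (Continuous.aestronglyMeasurable (by fun_prop)) ?_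
  rw [ae_restrict_iff' measurableSet_Ioi]
  filter_upwards with t ht
  rw [mem_Ioi] at ht
  rw [aux_norm n a ht, Real.rpow_one, Real.rpow_natCast]

lemma aux_tendsto (n : ℕ) {a : ℂ} (ha : 0 < a.re) :
    Tendsto (fun t : ℝ => (t : ℂ) ^ n * Complex.exp (-a * t)) atTop (𝓝 0) := by
  apply squeeze_zero_norm' (a := fun t : ℝ => t ^ (n : ℝ) * Real.exp (-a.re * t)) ?_
    (tendsto_rpow_mul_exp_neg_mul_atTop_nhds_zero _ _ ha)
  filter_upwards [eventually_gt_atTop (0:ℝ)] with t ht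
  rw [aux_norm n a ht, ← Real.rpow_natCast t n]

lemma aux_eval : ∀ (n : ℕ) {a : ℂ}, 0 < a.re →
    ∫ t in Set.Ioi (0:ℝ), (t : ℂ) ^ n * Complex.exp (-a * t) = n ! / a ^ (n + 1) := by
  intro n
  induction n with
  | zero =>
    intro a ha
    have ha0 : a ≠ 0 := fun h => by simp [h] at ha
    have key := integral_Ioi_of_hasDerivAt_of_tendsto
      (f := fun t : ℝ => -Complex.exp (-a * t) / a)
      (f' := fun t : ℝ => Complex.exp (-a * t)) (a := (0:ℝ)) (m := 0)
      (Continuous.continuousWithinAt (by fun_prop)) ?_ ?_ ?_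
    · rw [show (fun t : ℝ => ((t:ℂ)) ^ 0 * Complex.exp (-a * t)) = fun t : ℝ =>
        Complex.exp (-a * t) by funext t; simp] at *
      rw [key]
      simp [Nat.factorial]
      field_simp
    · intro x hx
      have h1 : HasDerivAt (fun z : ℂ => Complex.exp (-a * z))
          (Complex.exp (-a * (x:ℝ)) * -a) (x:ℝ) := by
        simpa using ((hasDerivAt_id ((x:ℝ):ℂ)).const_mul (-a)).cexp
      have h := (h1.comp_ofReal).div_const a |>.neg
      convert h using 1
      · funext t; rw [Pi.neg_apply, neg_div]
      · rw [mul_neg, neg_div, neg_neg, mul_div_assoc, div_self ha0, mul_one]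
    · simpa using (aux_intOn 0 ha)
    · have := ((aux_tendsto 0 ha).div_const a).neg
      simpa [neg_div] using this
  | succ n ih =>
    intro a ha
    have ha0 : a ≠ 0 := fun h => by simp [h] at ha
    have key := integral_Ioi_of_hasDerivAt_of_tendsto
      (f := fun t : ℝ => -((t:ℂ) ^ (n+1) * Complex.exp (-a * t)))
      (f' := fun x : ℝ => (-((n:ℂ)+1)) * ((x:ℂ) ^ n * Complex.exp (-a * x)) +
        a * ((x:ℂ) ^ (n+1) * Complex.exp (-a * x))) (a := (0:ℝ)) (m := 0)
      (Continuous.continuousWithinAt (by fun_prop)) ?_ ?_ ?_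
    · rw [integral_add (((aux_intOn n ha).const_mul _)) ((aux_intOn (n+1) ha).const_mul _),
        integral_const_mul, integral_const_mul, ih ha] at key
      simp only [Complex.ofReal_zero, zero_pow (Nat.succ_ne_zero n), zero_mul, neg_zero,
        sub_zero] at key
      rw [eq_div_iff (pow_ne_zero _ ha0)]
      have h2 : a * ∫ t in Set.Ioi (0:ℝ), (t:ℂ) ^ (n+1) * Complex.exp (-a * t)
          = ((n:ℂ)+1) * ((n ! : ℂ) / a ^ (n+1)) := by linear_combination key
      have h3 : a ^ (n+1) * ((n ! : ℂ) / a ^ (n+1)) = (n ! : ℂ) := by field_simp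
      calc (∫ t in Set.Ioi (0:ℝ), (t:ℂ) ^ (n+1) * Complex.exp (-a * t)) * a ^ (n + 1 + 1)
          = (a * ∫ t in Set.Ioi (0:ℝ), (t:ℂ) ^ (n+1) * Complex.exp (-a * t)) * a ^ (n+1) := by
            ring
        _ = ((n:ℂ)+1) * (a ^ (n+1) * ((n ! : ℂ) / a ^ (n+1))) := by rw [h2]; ring
        _ = ((n+1)! : ℂ) := by rw [h3, Nat.factorial_succ]; push_cast; ring
    · intro x hx
      have h1 : HasDerivAt (fun z : ℂ => z ^ (n+1) * Complex.exp (-a * z))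
          ((((n:ℂ)+1) * ((x:ℝ):ℂ) ^ n) * Complex.exp (-a * (x:ℝ)) +
            ((x:ℝ):ℂ) ^ (n+1) * (Complex.exp (-a * (x:ℝ)) * -a)) ((x:ℝ):ℂ) := by
        have := (hasDerivAt_pow (n+1) ((x:ℝ):ℂ)).mul
          (((hasDerivAt_id ((x:ℝ):ℂ)).const_mul (-a)).cexp)
        simpa [Pi.mul_def] using this
      have h := (h1.comp_ofReal).neg
      convert h using 1
      · funext t; rw [Pi.neg_apply]
      ring
    · exact ((aux_intOn n ha).const_mul _).add ((aux_intOn (n+1) ha).const_mul _)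
    · simpa using (aux_tendsto (n+1) ha).neg

lemma aux_eval_real (n : ℕ) {c : ℝ} (hc : 0 < c) :
    ∫ t in Set.Ioi (0:ℝ), t ^ n * Real.exp (-c * t) = n ! / c ^ (n + 1) := by
  have h := Real.integral_rpow_mul_exp_neg_mul_Ioi (a := (n:ℝ)+1) (r := c) (by positivity) hc
  rw [show ((n:ℝ)+1)-1 = (n:ℝ) by ring,
    show ((n:ℝ)+1) = ((n+1:ℕ):ℝ) by push_cast; ring] at h
  have h2 : Set.EqOn (fun t : ℝ => t ^ ((n:ℝ)) * Real.exp (-(c*t)))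
      (fun t : ℝ => t ^ n * Real.exp (-c * t)) (Set.Ioi 0) := by
    intro t ht
    simp only
    rw [Real.rpow_natCast, neg_mul]
  rw [setIntegral_congr_fun measurableSet_Ioi h2] at h
  rw [h, Real.rpow_natCast, show ((n+1:ℕ):ℝ) = (n:ℝ)+1 from by push_cast; ring,
    Real.Gamma_nat_eq_factorial, div_pow, one_pow]
  ring

/-- Evaluation of the inner Whittaker-theta integral: for `m ≥ 2`, the function
`(t,y) ↦ t^{m−1}·(−2 + iy)^m·exp(−πt(4 + y²))·e^{2πiy}` is absolutely integrable on
`(0,∞) × ℝ` and its iterated integral equals `(−2)^m · e^{−4π}`. -/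
theorem double_integral_eval (m : ℕ) (hm : 2 ≤ m) :
    IntegrableOn
      (fun p : ℝ × ℝ => (p.1 : ℂ) ^ (m - 1) * (-2 + Complex.I * (p.2 : ℂ)) ^ m *
        Complex.exp (-(π : ℂ) * (p.1 : ℂ) * (4 + (p.2 : ℂ) ^ 2)) *
        Complex.exp (2 * (π : ℂ) * Complex.I * (p.2 : ℂ)))
      (Set.Ioi (0 : ℝ) ×ˢ (Set.univ : Set ℝ)) ∧
    ∫ y : ℝ, ∫ t in Set.Ioi (0 : ℝ),
        ((t : ℂ) ^ (m - 1) * (-2 + Complex.I * (y : ℂ)) ^ m *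
          Complex.exp (-(π : ℂ) * (t : ℂ) * (4 + (y : ℂ) ^ 2)) *
          Complex.exp (2 * (π : ℂ) * Complex.I * (y : ℂ))) =
      (-2 : ℂ) ^ m * Complex.exp (-4 * (π : ℂ)) := by
  have hm1 : m - 1 + 1 = m := by omega
  have hexp : ∀ (t y : ℝ), -(π:ℂ) * t * (4 + (y:ℂ)^2) = -((π*(4+y^2):ℝ):ℂ) * t := by
    intro t y; push_cast; ring
  have hrey : ∀ y : ℝ, (0:ℝ) < ((π*(4+y^2):ℝ):ℂ).re := by
    intro y; rw [Complex.ofReal_re]; positivity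
  set g : ℝ → ℂ := (Set.Ioi (0:ℝ)).indicator
    (fun t : ℝ => (t:ℂ)^(m-1) * Complex.exp (-(((4*π:ℝ)):ℂ) * t)) with hgdef
  have h4pi : (0:ℝ) < (((4*π:ℝ)):ℂ).re := by rw [Complex.ofReal_re]; positivity
  have hg_int : Integrable g :=
    (integrable_indicator_iff measurableSet_Ioi).2 (aux_intOn (m-1) h4pi)
  have hzre : ∀ y : ℝ, (4*(π:ℂ) + 2*(π:ℂ)*Complex.I*(y:ℂ)).re = 4*π := by intro y; simp
  have hzim : ∀ y : ℝ, (4*(π:ℂ) + 2*(π:ℂ)*Complex.I*(y:ℂ)).im = 2*π*y := by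
    intro y; simp
  have hzre' : ∀ y : ℝ, 0 < (4*(π:ℂ) + 2*(π:ℂ)*Complex.I*(y:ℂ)).re := by
    intro y; rw [hzre]; positivity
  have hzne : ∀ y : ℝ, (4*(π:ℂ) + 2*(π:ℂ)*Complex.I*(y:ℂ)) ≠ 0 := by
    intro y h
    have h2 := hzre y
    rw [h, Complex.zero_re] at h2
    have : (0:ℝ) < 4*π := by positivity
    linarith
  -- Fourier transform of g
  have hFg : ∀ y : ℝ, 𝓕 g y = (((m-1)! : ℕ) : ℂ) / (4*(π:ℂ) + 2*(π:ℂ)*Complex.I*(y:ℂ)) ^ m := by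
    intro y
    rw [Real.fourier_real_eq_integral_exp_smul]
    have heq : ∀ v : ℝ, Complex.exp (↑(-2*π*v*y) * Complex.I) • g v
        = (Set.Ioi (0:ℝ)).indicator (fun v : ℝ => (v:ℂ)^(m-1) *
            Complex.exp (-(4*(π:ℂ) + 2*(π:ℂ)*Complex.I*(y:ℂ)) * v)) v := by
      intro v
      by_cases hv : v ∈ Set.Ioi (0:ℝ)
      · rw [hgdef, Set.indicator_of_mem hv, Set.indicator_of_mem hv, smul_eq_mul,
          show Complex.exp (↑(-2*π*v*y) * Complex.I) * ((v:ℂ)^(m-1) *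
            Complex.exp (-(((4*π:ℝ)):ℂ) * v)) = (v:ℂ)^(m-1) *
            (Complex.exp (↑(-2*π*v*y) * Complex.I) * Complex.exp (-(((4*π:ℝ)):ℂ) * v)) from
            by ring, ← Complex.exp_add]
        congr 2
        push_cast
        ring
      · rw [hgdef, Set.indicator_of_notMem hv, Set.indicator_of_notMem hv, smul_zero]
    calc (∫ v : ℝ, Complex.exp (↑(-2*π*v*y) * Complex.I) • g v)
        = ∫ v : ℝ, (Set.Ioi (0:ℝ)).indicator (fun v : ℝ => (v:ℂ)^(m-1) *
            Complex.exp (-(4*(π:ℂ) + 2*(π:ℂ)*Complex.I*(y:ℂ)) * v)) v := by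
          simp_rw [heq]
      _ = ∫ v in Set.Ioi (0:ℝ), (v:ℂ)^(m-1) *
            Complex.exp (-(4*(π:ℂ) + 2*(π:ℂ)*Complex.I*(y:ℂ)) * v) :=
          integral_indicator measurableSet_Ioi
      _ = _ := by rw [aux_eval (m-1) (hzre' y), hm1]
  -- bound for ‖z y‖
  have hz1 : ∀ y : ℝ, 1 ≤ ‖4*(π:ℂ) + 2*(π:ℂ)*Complex.I*(y:ℂ)‖ := by
    intro y
    have h := Complex.abs_re_le_norm (4*(π:ℂ) + 2*(π:ℂ)*Complex.I*(y:ℂ))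
    rw [hzre y] at h
    calc (1:ℝ) ≤ |4*π| := by rw [abs_of_pos (by positivity)]; nlinarith [pi_gt_three]
      _ ≤ _ := h
  have hzsq : ∀ y : ℝ, ‖4*(π:ℂ) + 2*(π:ℂ)*Complex.I*(y:ℂ)‖^2 = (4*π)^2 + (2*π*y)^2 := by
    intro y
    rw [Complex.sq_norm, Complex.normSq_apply, hzre, hzim]
    ring
  have hFg_int : Integrable (𝓕 g) := by
    rw [funext hFg]
    apply Integrable.mono' ((integrable_inv_one_add_sq).const_mul (((m-1)! : ℕ) : ℝ))
    · exact Continuous.aestronglyMeasurable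
        (continuous_const.div (by fun_prop) (fun y => pow_ne_zero _ (hzne y)))
    · filter_upwards with y
      rw [norm_div, norm_pow]
      have hb : (1 + y^2) ≤ ‖4*(π:ℂ) + 2*(π:ℂ)*Complex.I*(y:ℂ)‖^m := by
        calc 1 + y^2 ≤ ‖4*(π:ℂ) + 2*(π:ℂ)*Complex.I*(y:ℂ)‖^2 := by
              rw [hzsq y]
              nlinarith [pi_gt_three, sq_nonneg y,
                mul_le_mul_of_nonneg_left (show (1:ℝ) ≤ 4*π^2 by nlinarith [pi_gt_three])
                  (sq_nonneg y)]
          _ ≤ _ := pow_le_pow_right₀ (hz1 y) hm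
      have hnn : ‖(((m-1)! : ℕ) : ℂ)‖ = (((m-1)! : ℕ) : ℝ) := by
        rw [Complex.norm_natCast]
      rw [hnn, show (((m-1)! : ℕ):ℝ) * (1+y^2)⁻¹ = (((m-1)! : ℕ):ℝ)/(1+y^2) by ring]
      exact div_le_div_of_nonneg_left (by positivity) (by positivity) hb
  -- continuity of g at 1
  have hg_cont1 : ContinuousAt g 1 := by
    have hmem : Set.Ioi (0:ℝ) ∈ 𝓝 (1:ℝ) := isOpen_Ioi.mem_nhds (by norm_num)
    have heq : g =ᶠ[𝓝 (1:ℝ)]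
        fun t : ℝ => (t:ℂ)^(m-1) * Complex.exp (-(((4*π:ℝ)):ℂ) * t) := by
      filter_upwards [hmem] with t ht
      exact Set.indicator_of_mem ht _
    exact ContinuousAt.congr (Continuous.continuousAt (by fun_prop)) heq.symm
  -- Fourier inversion
  have hinv : ∫ v : ℝ, Complex.exp (2*(π:ℂ)*Complex.I*(v:ℂ)) * 𝓕 g v
      = Complex.exp (-4*(π:ℂ)) := by
    have h := hg_int.fourierInv_fourier_eq hFg_int hg_cont1
    rw [fourierInv_eq_fourier_neg,
      Real.fourier_real_eq_integral_exp_smul] at h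
    calc ∫ v : ℝ, Complex.exp (2*(π:ℂ)*Complex.I*(v:ℂ)) * 𝓕 g v
        = ∫ v : ℝ, Complex.exp (↑(-2*π*v*(-1:ℝ)) * Complex.I) • 𝓕 g v := by
          congr 1
          funext v
          rw [smul_eq_mul]
          congr 1
          push_cast
          ring
      _ = g 1 := h
      _ = Complex.exp (-4*(π:ℂ)) := by
          rw [hgdef, Set.indicator_of_mem (by norm_num : (1:ℝ) ∈ Set.Ioi (0:ℝ))]
          push_cast
          norm_num
  -- pointwise evaluation of the inner integral
  have hval : ∀ y : ℝ, (∫ t in Set.Ioi (0 : ℝ),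
      ((t : ℂ) ^ (m - 1) * (-2 + Complex.I * (y : ℂ)) ^ m *
        Complex.exp (-(π : ℂ) * (t : ℂ) * (4 + (y : ℂ) ^ 2)) *
        Complex.exp (2 * (π : ℂ) * Complex.I * (y : ℂ))))
      = (-2:ℂ)^m * (Complex.exp (2*(π:ℂ)*Complex.I*(y:ℂ)) * 𝓕 g y) := by
    intro y
    have hC : (∫ t in Set.Ioi (0 : ℝ),
        ((t : ℂ) ^ (m - 1) * (-2 + Complex.I * (y : ℂ)) ^ m *
          Complex.exp (-(π : ℂ) * (t : ℂ) * (4 + (y : ℂ) ^ 2)) *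
          Complex.exp (2 * (π : ℂ) * Complex.I * (y : ℂ))))
        = ((-2 + Complex.I*(y:ℂ))^m * Complex.exp (2*(π:ℂ)*Complex.I*(y:ℂ))) *
          ∫ t in Set.Ioi (0:ℝ), (t:ℂ)^(m-1) * Complex.exp (-((π*(4+y^2):ℝ):ℂ) * t) := by
      rw [← integral_const_mul]
      congr 1
      funext t
      rw [← hexp t y]
      ring
    rw [hC, aux_eval (m-1) (hrey y), hm1, hFg y]
    have h1 : ((π*(4+y^2):ℝ):ℂ) ≠ 0 := by
      rw [Ne, Complex.ofReal_eq_zero]; positivity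
    have hkey : (-2 + Complex.I*(y:ℂ))^m * (4*(π:ℂ) + 2*(π:ℂ)*Complex.I*(y:ℂ))^m
        = (-2:ℂ)^m * ((π*(4+y^2):ℝ):ℂ)^m := by
      rw [← mul_pow, ← mul_pow]
      congr 1
      push_cast
      linear_combination (2*(π:ℂ)*(y:ℂ)^2) * Complex.I_sq
    calc ((-2 + Complex.I*(y:ℂ))^m * Complex.exp (2*(π:ℂ)*Complex.I*(y:ℂ))) *
          ((((m-1)! : ℕ):ℂ) / ((π*(4+y^2):ℝ):ℂ)^m)
        = (Complex.exp (2*(π:ℂ)*Complex.I*(y:ℂ)) * (((m-1)! : ℕ):ℂ)) *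
          ((-2 + Complex.I*(y:ℂ))^m / ((π*(4+y^2):ℝ):ℂ)^m) := by ring
      _ = (Complex.exp (2*(π:ℂ)*Complex.I*(y:ℂ)) * (((m-1)! : ℕ):ℂ)) *
          ((-2:ℂ)^m / (4*(π:ℂ) + 2*(π:ℂ)*Complex.I*(y:ℂ))^m) := by
          congr 1
          rw [div_eq_div_iff (pow_ne_zero m h1) (pow_ne_zero m (hzne y))]
          linear_combination hkey
      _ = (-2:ℂ)^m * (Complex.exp (2*(π:ℂ)*Complex.I*(y:ℂ)) *
          ((((m-1)! : ℕ):ℂ) / (4*(π:ℂ) + 2*(π:ℂ)*Complex.I*(y:ℂ))^m)) := by ring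
  constructor
  · -- integrability
    rw [IntegrableOn, Measure.volume_eq_prod, ← Measure.prod_restrict, Measure.restrict_univ]
    have hmeas : AEStronglyMeasurable
        (fun p : ℝ × ℝ => (p.1 : ℂ) ^ (m - 1) * (-2 + Complex.I * (p.2 : ℂ)) ^ m *
          Complex.exp (-(π : ℂ) * (p.1 : ℂ) * (4 + (p.2 : ℂ) ^ 2)) *
          Complex.exp (2 * (π : ℂ) * Complex.I * (p.2 : ℂ)))
        ((volume.restrict (Set.Ioi 0)).prod volume) :=
      Continuous.aestronglyMeasurable (by fun_prop)
    refine (integrable_prod_iff' hmeas).2 ⟨?_, ?_⟩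
    · filter_upwards with y
      have heq : (fun t : ℝ => (t : ℂ) ^ (m - 1) * (-2 + Complex.I * (y : ℂ)) ^ m *
          Complex.exp (-(π : ℂ) * (t : ℂ) * (4 + (y : ℂ) ^ 2)) *
          Complex.exp (2 * (π : ℂ) * Complex.I * (y : ℂ)))
          = fun t : ℝ => ((-2 + Complex.I*(y:ℂ))^m * Complex.exp (2*(π:ℂ)*Complex.I*(y:ℂ))) *
            ((t:ℂ)^(m-1) * Complex.exp (-((π*(4+y^2):ℝ):ℂ) * t)) := by
        funext t
        rw [← hexp t y]
        ring
      exact heq ▸ ((aux_intOn (m-1) (hrey y)).const_mul _)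
    · have hnormeq : ∀ y : ℝ, (∫ t : ℝ, ‖(t : ℂ) ^ (m - 1) * (-2 + Complex.I * (y : ℂ)) ^ m *
          Complex.exp (-(π : ℂ) * (t : ℂ) * (4 + (y : ℂ) ^ 2)) *
          Complex.exp (2 * (π : ℂ) * Complex.I * (y : ℂ))‖ ∂(volume.restrict (Set.Ioi 0)))
          = ‖-2 + Complex.I*(y:ℂ)‖^m * ((((m-1)! : ℕ):ℝ) / (π*(4+y^2))^m) := by
        intro y
        have hEq : Set.EqOn (fun t : ℝ => ‖(t : ℂ) ^ (m - 1) * (-2 + Complex.I * (y : ℂ)) ^ m *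
            Complex.exp (-(π : ℂ) * (t : ℂ) * (4 + (y : ℂ) ^ 2)) *
            Complex.exp (2 * (π : ℂ) * Complex.I * (y : ℂ))‖)
            (fun t : ℝ => ‖-2 + Complex.I*(y:ℂ)‖^m *
              (t^(m-1) * Real.exp (-(π*(4+y^2)) * t))) (Set.Ioi 0) := by
          intro t ht
          rw [Set.mem_Ioi] at ht
          simp only
          rw [hexp t y,
            show -((π*(4+y^2):ℝ):ℂ) * (t:ℂ) = ((-(π*(4+y^2))*t : ℝ):ℂ) by push_cast; ring,
            show (2*(π:ℂ)*Complex.I*(y:ℂ)) = (((2*π*y : ℝ)):ℂ) * Complex.I by push_cast; ring,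
            norm_mul, norm_mul, norm_mul, norm_pow, norm_pow,
            Complex.norm_exp_ofReal, Complex.norm_exp_ofReal_mul_I, Complex.norm_real,
            Real.norm_eq_abs, abs_of_pos ht]
          ring
        rw [setIntegral_congr_fun measurableSet_Ioi hEq, integral_const_mul,
          aux_eval_real (m-1) (show (0:ℝ) < π*(4+y^2) by positivity), hm1]
      simp_rw [hnormeq]
      apply Integrable.mono' ((integrable_inv_one_add_sq).const_mul ((((m-1)! : ℕ):ℝ)/π^m))
      · apply Continuous.aestronglyMeasurable
        apply Continuous.mul (by fun_prop)
        exact continuous_const.div (by fun_prop)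
          (fun y => pow_ne_zero _ (by positivity : π*(4+y^2) ≠ 0))
      · filter_upwards with y
        set r : ℝ := ‖-2 + Complex.I*(y:ℂ)‖ with hrdef
        have hr2 : r^2 = 4 + y^2 := by
          rw [hrdef, Complex.sq_norm, Complex.normSq_apply]
          simp
          ring
        have hr0 : 0 ≤ r := norm_nonneg _
        have hr1 : 1 ≤ r := by nlinarith [sq_nonneg y]
        have hkey : r^m * (1+y^2) ≤ (4+y^2)^m := by
          calc r^m * (1+y^2) ≤ r^m * r^2 := by
                apply mul_le_mul_of_nonneg_left _ (pow_nonneg hr0 m)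
                rw [hr2]; nlinarith [sq_nonneg y]
            _ = r^(m+2) := by rw [← pow_add]
            _ ≤ r^(m+m) := pow_le_pow_right₀ hr1 (by omega)
            _ = (r^2)^m := by rw [← two_mul, pow_mul]
            _ = (4+y^2)^m := by rw [hr2]
        rw [Real.norm_of_nonneg (by positivity)]
        rw [show r^m * ((((m-1)! : ℕ):ℝ)/(π*(4+y^2))^m)
            = ((((m-1)! : ℕ):ℝ) * r^m)/(π^m*(4+y^2)^m) by rw [mul_pow]; ring,
          show (((m-1)! : ℕ):ℝ)/π^m * (1+y^2)⁻¹ = (((m-1)! : ℕ):ℝ)/(π^m*(1+y^2)) by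
            rw [division_def, division_def, mul_inv, mul_assoc]]
        rw [div_le_div_iff₀ (by positivity) (by positivity)]
        nlinarith [mul_le_mul_of_nonneg_left hkey
          (show (0:ℝ) ≤ (((m-1)! : ℕ):ℝ) * π^m by positivity), pow_pos pi_pos m,
          (Nat.cast_pos (α := ℝ)).2 (Nat.factorial_pos (m-1)), sq_nonneg y]
  · -- value
    calc (∫ y : ℝ, ∫ t in Set.Ioi (0 : ℝ),
          ((t : ℂ) ^ (m - 1) * (-2 + Complex.I * (y : ℂ)) ^ m *
            Complex.exp (-(π : ℂ) * (t : ℂ) * (4 + (y : ℂ) ^ 2)) *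
            Complex.exp (2 * (π : ℂ) * Complex.I * (y : ℂ))))
        = ∫ y : ℝ, (-2:ℂ)^m * (Complex.exp (2*(π:ℂ)*Complex.I*(y:ℂ)) * 𝓕 g y) := by
          simp_rw [hval]
      _ = (-2:ℂ)^m * ∫ y : ℝ, Complex.exp (2*(π:ℂ)*Complex.I*(y:ℂ)) * 𝓕 g y :=
          integral_const_mul _ _
      _ = (-2:ℂ)^m * Complex.exp (-4*(π:ℂ)) := by rw [hinv]
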